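/- Let ℓ : (0,∞) → (0,∞) be slowly varying (regularly varying with index 0), eventually differentiable, and suppose t·ℓ'(t)/ℓ(t) = O(1/log t) as t → ∞. Then ℓ satisfies Condition L: for every function ε with ε(t) > 0 and ε(t) → 0 as t → ∞, log(t)·( ℓ((1+ε(t))t)/ℓ(t) − 1 ) → 0. -/

import Mathlib

open Filter Asymptotics

/-- A slowly varying, eventually differentiable function `ℓ` with
`t ℓ'(t)/ℓ(t) = O(1/log t)` satisfies Condition L. -/
theorem slowly_varying_derivative_condition
    (l : ℝ → ℝ)
    (hlpos : ∀ t : ℝ, 0 < t → 0 < l t)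
    (hlmeas : Measurable l)
    (hlSV : ∀ u : ℝ, 0 < u →
      Tendsto (fun t : ℝ => l (u * t) / l t) atTop (nhds 1))
    (hldiff : ∃ t₀ : ℝ, ∀ t : ℝ, t₀ ≤ t → DifferentiableAt ℝ l t)
    (hlbigO : (fun t : ℝ => t * deriv l t / l t) =O[atTop]
      fun t : ℝ => 1 / Real.log t) :
    ∀ ε : ℝ → ℝ, (∀ t, 0 < ε t) → Tendsto ε atTop (nhds 0) →
      Tendsto (fun t : ℝ => Real.log t * (l ((1 + ε t) * t) / l t - 1))
        atTop (nhds 0) := by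
  intro ε hεpos hεto
  obtain ⟨t₀, hdiff⟩ := hldiff
  obtain ⟨C, hCpos, hC⟩ := hlbigO.exists_pos
  rw [isBigOWith_iff, eventually_atTop] at hC
  obtain ⟨T₁, hT₁⟩ := hC
  -- the bound function
  have hbound : Tendsto (fun t : ℝ => 2 * C * ε t) atTop (nhds 0) := by
    have := hεto.const_mul (2 * C)
    simpa using this
  apply squeeze_zero_norm' _ hbound
  -- eventually C * ε t ≤ 1
  have hsmall : ∀ᶠ t in atTop, ε t < 1 / C := by
    exact hεto.eventually (eventually_lt_nhds (by positivity))
  filter_upwards [eventually_ge_atTop (max (max t₀ T₁) 3), hsmall] with t ht hεt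
  have ht3 : (3 : ℝ) ≤ t := le_trans (le_max_right _ _) ht
  have ht0 : t₀ ≤ t := le_trans ((le_max_left _ _).trans (le_max_left _ _)) ht
  have hT1t : T₁ ≤ t := le_trans ((le_max_right _ _).trans (le_max_left _ _)) ht
  have htpos : (0 : ℝ) < t := by linarith
  have hlogt : (1 : ℝ) ≤ Real.log t := by
    rw [show (1:ℝ) = Real.log (Real.exp 1) by simp]
    exact Real.log_le_log (Real.exp_pos 1) (le_trans (by
      have := Real.exp_one_lt_d9; linarith) ht3)
  have hlogtpos : (0 : ℝ) < Real.log t := lt_of_lt_of_le one_pos hlogt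
  set b := (1 + ε t) * t with hb
  have htb : t < b := by
    have := hεpos t
    have : t * 1 < t * (1 + ε t) := by nlinarith
    rw [hb]; nlinarith
  -- derivative bound on [t, b]
  have hderiv_bound : ∀ s : ℝ, t ≤ s → |deriv l s / l s| ≤ C / (t * Real.log t) := by
    intro s hs
    have hst3 : (3 : ℝ) ≤ s := le_trans ht3 hs
    have hspos : (0 : ℝ) < s := by linarith
    have hlogs : Real.log t ≤ Real.log s := Real.log_le_log htpos hs
    have hlogspos : (0 : ℝ) < Real.log s := lt_of_lt_of_le hlogtpos hlogs
    have h1 : s * |deriv l s / l s| ≤ C * (1 / Real.log s) := by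
      have h0 := hT₁ s (le_trans hT1t hs)
      have ha : |(1:ℝ) / Real.log s| = 1 / Real.log s := abs_of_pos (by positivity)
      have hb' : |s * deriv l s / l s| = s * |deriv l s / l s| := by
        rw [mul_div_assoc, abs_mul, abs_of_pos hspos]
      rw [Real.norm_eq_abs, Real.norm_eq_abs, ha, hb'] at h0
      exact h0
    have h2 : |deriv l s / l s| ≤ C / (s * Real.log s) := by
      rw [le_div_iff₀ (by positivity)]
      calc |deriv l s / l s| * (s * Real.log s)
          = s * |deriv l s / l s| * Real.log s := by ring
        _ ≤ (C * (1 / Real.log s)) * Real.log s := by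
            exact mul_le_mul_of_nonneg_right h1 hlogspos.le
        _ = C := by field_simp
    refine h2.trans (div_le_div_of_nonneg_left hCpos.le (by positivity) ?_)
    exact mul_le_mul hs hlogs hlogtpos.le hspos.le
  -- MVT for log ∘ l on [t, b]
  have hdiffOn : ∀ s ∈ Set.Icc t b, HasDerivAt (fun x => Real.log (l x))
      (deriv l s / l s) s := by
    intro s hs
    have hspos : (0 : ℝ) < s := lt_of_lt_of_le htpos hs.1
    have hd : DifferentiableAt ℝ l s := hdiff s (le_trans ht0 hs.1)
    exact hd.hasDerivAt.log (ne_of_gt (hlpos s hspos))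
  obtain ⟨c, hc, hceq⟩ := exists_hasDerivAt_eq_slope (fun x => Real.log (l x))
    (fun s => deriv l s / l s) htb
    (fun s hs => (hdiffOn s hs).continuousAt.continuousWithinAt)
    (fun s hs => hdiffOn s (Set.mem_Icc_of_Ioo hs))
  -- bound |log (l b) - log (l t)|
  have hbt : b - t = ε t * t := by rw [hb]; ring
  have hbt0 : b - t ≠ 0 := ne_of_gt (by linarith)
  have hx : Real.log (l b) - Real.log (l t) = (deriv l c / l c) * (ε t * t) := by
    rw [← hbt, hceq, div_mul_cancel₀ _ hbt0]
  have hxbound : |Real.log (l b) - Real.log (l t)| ≤ C * ε t / Real.log t := by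
    rw [hx, abs_mul]
    have h1 := hderiv_bound c hc.1.le
    have h2 : |ε t * t| = ε t * t := abs_of_pos (mul_pos (hεpos t) htpos)
    rw [h2]
    calc |deriv l c / l c| * (ε t * t)
        ≤ C / (t * Real.log t) * (ε t * t) := by
          exact mul_le_mul_of_nonneg_right h1 (mul_pos (hεpos t) htpos).le
      _ = C * ε t / Real.log t := by field_simp
  have hxle1 : |Real.log (l b) - Real.log (l t)| ≤ 1 := by
    refine hxbound.trans ?_
    rw [div_le_one hlogtpos]
    have : C * ε t ≤ 1 := by
      have := hεt
      rw [lt_div_iff₀ hCpos] at this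
      nlinarith
    linarith
  -- ratio = exp of difference
  have hratio : l b / l t = Real.exp (Real.log (l b) - Real.log (l t)) := by
    rw [Real.exp_sub, Real.exp_log (hlpos b (lt_trans htpos htb)),
      Real.exp_log (hlpos t htpos)]
  have hexp := Real.abs_exp_sub_one_le hxle1
  rw [Real.norm_eq_abs, abs_mul, abs_of_pos hlogtpos]
  calc Real.log t * |l b / l t - 1|
      = Real.log t * |Real.exp (Real.log (l b) - Real.log (l t)) - 1| := by
        rw [hratio]
    _ ≤ Real.log t * (2 * |Real.log (l b) - Real.log (l t)|) :=
        mul_le_mul_of_nonneg_left hexp hlogtpos.le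
    _ ≤ Real.log t * (2 * (C * ε t / Real.log t)) := by
        exact mul_le_mul_of_nonneg_left (by linarith [hxbound]) hlogtpos.le
    _ = 2 * C * ε t := by field_simp
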